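/- The transformation r3 of the quantum Garnier system G(1,1,1,1,1) is a quantum canonical transformation: suppose y1 is a unit of R, and define q1 = −x1y1^2 + α3·y1, p1 = y1^{-1}, q2 = x2, p2 = y2. Then (q1, p1, q2, p2) again satisfy the canonical commutation relations: [q1,p1] = [q2,p2] = h and [q1,q2] = [p1,p2] = [q1,p2] = [q2,p1] = 0. -/
import Mathlib

/-- If `a` commutes with an invertible `y`, it commutes with its inverse. -/
lemma comm_inv_aux {R : Type*} [Ring R] (a y yi : R)
    (hl : yi * y = 1) (hr : y * yi = 1) (hc : a * y = y * a) :
    a * yi = yi * a := by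
  calc a * yi = yi * (y * a) * yi := by
        rw [← mul_assoc yi y a, hl, one_mul]
    _ = yi * (a * y) * yi := by rw [hc]
    _ = yi * a := by rw [mul_assoc, mul_assoc, hr, mul_one]

/-- The transformation r3 of the quantum Garnier system G(1,1,1,1,1) is a quantum
canonical transformation. -/
theorem quantum_garnier_G11111_r3_canonical
    {R : Type*} [Ring R]
    (h α3 : R)
    (hh : ∀ r : R, h * r = r * h)
    (hA3 : ∀ r : R, α3 * r = r * α3)
    (x1 y1 x2 y2 : R)
    (hx1y1 : x1 * y1 - y1 * x1 = h)
    (hx2y2 : x2 * y2 - y2 * x2 = h)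
    (hx1x2 : x1 * x2 - x2 * x1 = 0)
    (hy1y2 : y1 * y2 - y2 * y1 = 0)
    (hx1y2 : x1 * y2 - y2 * x1 = 0)
    (hx2y1 : x2 * y1 - y1 * x2 = 0)
    (y1i : R) (hy1il : y1i * y1 = 1) (hy1ir : y1 * y1i = 1)
    (q1 p1 q2 p2 : R)
    (hq1 : q1 = -(x1 * y1^2) + α3 * y1)
    (hp1 : p1 = y1i)
    (hq2 : q2 = x2)
    (hp2 : p2 = y2) :
    q1 * p1 - p1 * q1 = h ∧ q2 * p2 - p2 * q2 = h ∧
    q1 * q2 - q2 * q1 = 0 ∧ p1 * p2 - p2 * p1 = 0 ∧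
    q1 * p2 - p2 * q1 = 0 ∧ q2 * p1 - p1 * q2 = 0 := by
  rw [hq1, hp1, hq2, hp2]
  have hx1 : x1 * y1 = y1 * x1 + h := by rw [← hx1y1]; noncomm_ring
  have e12 : x1 * x2 = x2 * x1 := sub_eq_zero.mp hx1x2
  have ey12 : y1 * y2 = y2 * y1 := sub_eq_zero.mp hy1y2
  have ex1y2 : x1 * y2 = y2 * x1 := sub_eq_zero.mp hx1y2
  have ex2y1 : x2 * y1 = y1 * x2 := sub_eq_zero.mp hx2y1
  have cx2 : x2 * y1i = y1i * x2 := comm_inv_aux x2 y1 y1i hy1il hy1ir ex2y1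
  have cy2 : y2 * y1i = y1i * y2 :=
    comm_inv_aux y2 y1 y1i hy1il hy1ir ey12.symm
  have A : x1 * y1 ^ 2 * y1i = x1 * y1 := by
    rw [pow_two, mul_assoc, mul_assoc, hy1ir, mul_one]
  have B : y1i * (x1 * y1 ^ 2) = x1 * y1 + h := by
    rw [pow_two, ← mul_assoc x1 y1 y1, hx1, add_mul, mul_add, ← mul_assoc,
      ← mul_assoc, hy1il, one_mul, hh y1, ← mul_assoc, hy1il, one_mul, hx1]
  have C : α3 * y1 * y1i = α3 := by rw [mul_assoc, hy1ir, mul_one]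
  have D : y1i * (α3 * y1) = α3 := by rw [hA3 y1, ← mul_assoc, hy1il, one_mul]
  have K2 : Commute x2 x1 := e12.symm
  have K3 : Commute x2 y1 := ex2y1
  have K4 : Commute x2 α3 := (hA3 x2).symm
  have K5 : Commute y2 x1 := ex1y2.symm
  have K6 : Commute y2 y1 := ey12.symm
  have K7 : Commute y2 α3 := (hA3 y2).symm
  have Q2 : Commute x2 (-(x1 * y1 ^ 2) + α3 * y1) :=
    ((K2.mul_right (K3.pow_right 2)).neg_right).add_right (K4.mul_right K3)
  have Q5 : Commute y2 (-(x1 * y1 ^ 2) + α3 * y1) :=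
    ((K5.mul_right (K6.pow_right 2)).neg_right).add_right (K7.mul_right K6)
  refine ⟨?_, hx2y2, ?_, ?_, ?_, ?_⟩
  · rw [add_mul, mul_add, neg_mul, A, mul_neg, B, C, D]; noncomm_ring
  · exact sub_eq_zero.mpr Q2.symm
  · rw [cy2]; noncomm_ring
  · exact sub_eq_zero.mpr Q5.symm
  · rw [cx2]; noncomm_ring
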